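/- Let a_1,…,a_r be orthonormal vectors in ℝ^d, γ > 0, m ≥ r, f̃_j(x) = a_j^T x + (1 − j/m)γ, and suppose 2kδ < γ/m. Fix i ∈ [r] and a point x_i with a_i^T x_i ≥ 0 and a_j^T x_i = 0 for all j > i. Then for every x with ‖x − x_i‖ ≤ kδ, the argmax of j ↦ f̃_j(x) over j ∈ [r] is attained only at indices j ≤ i; i.e. max_{j ≤ i} f̃_j(x) > max_{j > i} f̃_j(x). -/

import Mathlib

/-- The `j`-th affine piece `f̃_j(x) = a_jᵀ x + (1 - j/m)γ` (`j` running over `1,…,r`). -/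
noncomputable def ftilPiece {d : ℕ} {r : ℕ} (m : ℕ) (γ : ℝ)
    (a : Fin r → EuclideanSpace ℝ (Fin d)) (j : Fin r)
    (x : EuclideanSpace ℝ (Fin d)) : ℝ :=
  (inner ℝ (a j) x : ℝ) + (1 - ((j : ℕ) + 1) / m) * γ

/-- Near a query point `x_i` (orthogonal to all later `a_j` and with `a_iᵀx_i ≥ 0`),
the maximum of the shifted affine pieces is attained only among the first `i` pieces:
every later piece is strictly dominated by some piece with index `≤ i`,
throughout the ball of radius `kδ`. -/
theorem stmt12 (d r m k : ℕ) (hr : 0 < r) (hm : r ≤ m) (γ δ : ℝ) (hγ : 0 < γ) (hδ : 0 ≤ δ)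
    (hkδ : 2 * k * δ < γ / m)
    (a : Fin r → EuclideanSpace ℝ (Fin d)) (ha : Orthonormal ℝ a)
    (i : Fin r) (xi : EuclideanSpace ℝ (Fin d))
    (hpos : 0 ≤ (inner ℝ (a i) xi : ℝ))
    (horth : ∀ j, i < j → (inner ℝ (a j) xi : ℝ) = 0) :
    ∀ x : EuclideanSpace ℝ (Fin d), ‖x - xi‖ ≤ k * δ →
      ∀ j, i < j → ∃ j' ≤ i, ftilPiece m γ a j x < ftilPiece m γ a j' x := by
  intro x hx j hij
  refine ⟨i, le_refl i, ?_⟩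
  have hm0 : (0:ℝ) < m := by exact_mod_cast lt_of_lt_of_le hr hm
  have hcs : ∀ l : Fin r, |(inner ℝ (a l) (x - xi) : ℝ)| ≤ k * δ := by
    intro l
    calc |(inner ℝ (a l) (x - xi) : ℝ)| ≤ ‖a l‖ * ‖x - xi‖ := abs_real_inner_le_norm _ _
      _ = ‖x - xi‖ := by rw [ha.1 l, one_mul]
      _ ≤ k * δ := hx
  have hsplit : ∀ l : Fin r, (inner ℝ (a l) x : ℝ) =
      (inner ℝ (a l) xi : ℝ) + (inner ℝ (a l) (x - xi) : ℝ) := by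
    intro l
    rw [← inner_add_right]
    congr 1
    abel
  have hii := hcs i
  have hjj := hcs j
  have hji := horth j hij
  have hgap : ((j:ℕ)+1)/(m:ℝ) - ((i:ℕ)+1)/(m:ℝ) ≥ 1/m := by
    rw [div_sub_div_same, ge_iff_le, div_le_div_iff_of_pos_right hm0]
    have : (i:ℕ) + 1 ≤ (j:ℕ) := hij
    push_cast
    linarith [(show ((i:ℕ):ℝ) + 1 ≤ ((j:ℕ):ℝ) by exact_mod_cast this)]
  have h1 : (inner ℝ (a i) x : ℝ) ≥ -(k*δ) := by
    rw [hsplit i]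
    have := abs_le.mp hii
    linarith
  have h2 : (inner ℝ (a j) x : ℝ) ≤ k*δ := by
    rw [hsplit j, hji]
    have := abs_le.mp hjj
    linarith
  unfold ftilPiece
  have hγm : (1/(m:ℝ)) * γ ≤ (((j:ℕ)+1)/m - ((i:ℕ)+1)/m) * γ := by
    apply mul_le_mul_of_nonneg_right hgap hγ.le
  have : (0:ℝ) < γ/m - 2*k*δ := by linarith
  have h1m : (1/(m:ℝ)) * γ = γ/m := by ring
  nlinarith [mul_pos hm0 hγ]
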